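/- Let s, t be naturals with s > t ≥ 2 and n := C(s,2) + C(t,2). Let G = (L, R, E) be a bipartite graph with deg_G(a) ≤ 2 for every a ∈ R and with distinct left nodes x_1, …, x_6 ∈ L such that deg_G(x_1) = deg_G(x_2) = s, deg_G(x_3) = deg_G(x_4) = t, deg_G(x_5) = deg_G(x_6) = n + 1, and deg_G(u) ≤ 1 for every u ∈ L ∖ {x_1, …, x_6}. If β(G) = n + C(n,2) and |N_G(x_5) ∩ N_G(x_6)| = n, then |N_G(x_1) ∩ N_G(x_2)| = s (i.e., x_1 and x_2 share all their neighbors), |N_G(x_3) ∩ N_G(x_4)| = t (i.e., x_3 and x_4 share all their neighbors), and β_G(x_i, x_j) = 0 for every other pair (i,j) with 1 ≤ i < j ≤ 6, (i,j) ∉ {(1,2), (3,4), (5,6)}. -/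

import Mathlib

open Finset

variable {L R : Type*} [Fintype L] [DecidableEq L] [Fintype R] [DecidableEq R]

/-- The set of neighbors of a left node `u` in the bipartite graph with edge set `E`. -/
def nbrs (E : Finset (L × R)) (u : L) : Finset R :=
  (E.filter (fun e => e.1 = u)).image Prod.snd

/-- The degree of a left node. -/
def ldeg (E : Finset (L × R)) (u : L) : ℕ := (nbrs E u).card

/-- The set of neighbors of a right node `a` in the bipartite graph with edge set `E`. -/
def rnbrs (E : Finset (L × R)) (a : R) : Finset L :=
  (E.filter (fun e => e.2 = a)).image Prod.fst

/-- The degree of a right node. -/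
def rdeg (E : Finset (L × R)) (a : R) : ℕ := (rnbrs E a).card

/-- The butterflies of the bipartite graph with edge set `E`: a butterfly is a pair of
two left nodes and two right nodes all pairwise connected. -/
def butterflies (E : Finset (L × R)) : Finset (Finset L × Finset R) :=
  Finset.univ.filter
    (fun B => B.1.card = 2 ∧ B.2.card = 2 ∧ ∀ u ∈ B.1, ∀ a ∈ B.2, (u, a) ∈ E)

/-- The total number of butterflies. -/
def bfc (E : Finset (L × R)) : ℕ := (butterflies E).card

/-- The number of butterflies containing the left node `u`. -/
def bfcn (E : Finset (L × R)) (u : L) : ℕ :=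
  ((butterflies E).filter (fun B => u ∈ B.1)).card

/-- The number of butterflies containing both left nodes `u` and `v`. -/
def bfcnn (E : Finset (L × R)) (u v : L) : ℕ :=
  ((butterflies E).filter (fun B => u ∈ B.1 ∧ v ∈ B.1)).card

/-- A `q`-BSO transforming edge set `E` into edge set `E'`. -/
def IsBSOStep (q : ℕ) (E E' : Finset (L × R)) : Prop :=
  1 ≤ q ∧ ∃ (S : Fin q → L × R) (σ : Equiv.Perm (Fin q)),
    Function.Injective S ∧ (∀ j, S j ∈ E) ∧ (∀ j, σ j ≠ j) ∧
    (∀ j, ((S j).1, (S (σ j)).2) ∉ E) ∧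
    E' = (E \ Finset.image S Finset.univ) ∪
      Finset.image (fun j => ((S j).1, (S (σ j)).2)) Finset.univ

set_option linter.unusedSectionVars false in
lemma mem_nbrs {E : Finset (L × R)} {u : L} {a : R} : a ∈ nbrs E u ↔ (u, a) ∈ E := by
  simp [nbrs]

set_option linter.unusedSectionVars false in
lemma mem_rnbrs {E : Finset (L × R)} {u : L} {a : R} : u ∈ rnbrs E a ↔ (u, a) ∈ E := by
  simp [rnbrs]

set_option linter.unusedSectionVars false in
lemma pair_eq {B1 : Finset L} {u v : L} (huv : u ≠ v) (hc1 : B1.card = 2)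
    (hu : u ∈ B1) (hv : v ∈ B1) : B1 = {u, v} := by
  symm
  apply Finset.eq_of_subset_of_card_le
  · intro x hx
    rcases Finset.mem_insert.mp hx with rfl | hx
    · exact hu
    · rw [Finset.mem_singleton.mp hx]; exact hv
  · rw [hc1, Finset.card_insert_of_notMem (by simp [huv]), Finset.card_singleton]

lemma bfcnn_eq {E : Finset (L × R)} {u v : L} (huv : u ≠ v) :
    bfcnn E u v = ((nbrs E u ∩ nbrs E v).card).choose 2 := by
  rw [bfcnn, ← Finset.card_powersetCard 2 (nbrs E u ∩ nbrs E v)]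
  apply Finset.card_bij (fun B _ => B.2)
  · rintro ⟨B1, B2⟩ hB
    simp only [Finset.mem_filter, butterflies, Finset.mem_univ, true_and] at hB
    obtain ⟨⟨hc1, hc2, hadj⟩, hu, hv⟩ := hB
    simp only [Finset.mem_powersetCard]
    refine ⟨fun a ha => ?_, hc2⟩
    simp only [Finset.mem_inter, mem_nbrs]
    exact ⟨hadj u hu a ha, hadj v hv a ha⟩
  · rintro ⟨B1, B2⟩ hB ⟨B1', B2'⟩ hB' h
    simp only [Finset.mem_filter, butterflies, Finset.mem_univ, true_and] at hB hB'
    obtain ⟨⟨hc1, -, -⟩, hu, hv⟩ := hB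
    obtain ⟨⟨hc1', -, -⟩, hu', hv'⟩ := hB'
    simp only at h
    rw [Prod.mk.injEq]
    exact ⟨(pair_eq huv hc1 hu hv).trans (pair_eq huv hc1' hu' hv').symm, h⟩
  · intro A hA
    simp only [Finset.mem_powersetCard] at hA
    refine ⟨({u, v}, A), ?_, rfl⟩
    simp only [Finset.mem_filter, butterflies, Finset.mem_univ, true_and]
    refine ⟨⟨?_, hA.2, ?_⟩, by simp, by simp⟩
    · rw [Finset.card_insert_of_notMem (by simp [huv]), Finset.card_singleton]
    · intro w hw a ha
      have := hA.1 ha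
      simp only [Finset.mem_inter, mem_nbrs] at this
      rcases Finset.mem_insert.mp hw with rfl | hw
      · exact this.1
      · rw [Finset.mem_singleton.mp hw]; exact this.2

lemma double_count (E : Finset (L × R)) :
    ∑ p ∈ (Finset.univ : Finset L).offDiag, bfcnn E p.1 p.2 = 2 * bfc E := by
  have h0 : ∀ p ∈ (Finset.univ : Finset L).offDiag,
      bfcnn E p.1 p.2 = ∑ B ∈ butterflies E, (if p.1 ∈ B.1 ∧ p.2 ∈ B.1 then 1 else 0) := by
    intro p _
    rw [Finset.sum_boole]
    rfl
  rw [Finset.sum_congr rfl h0, Finset.sum_comm]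
  have h2 : ∀ B ∈ butterflies E,
      (∑ p ∈ (Finset.univ : Finset L).offDiag, if p.1 ∈ B.1 ∧ p.2 ∈ B.1 then 1 else 0) = 2 := by
    intro B hB
    simp only [butterflies, Finset.mem_filter, Finset.mem_univ, true_and] at hB
    have hfil : Finset.filter (fun p => p.1 ∈ B.1 ∧ p.2 ∈ B.1) (Finset.univ : Finset L).offDiag
        = B.1.offDiag := by
      ext p
      simp [Finset.mem_offDiag, and_comm, and_left_comm]
    rw [Finset.sum_boole, hfil, Finset.offDiag_card, hB.1]
    norm_num
  rw [Finset.sum_congr rfl h2, Finset.sum_const, smul_eq_mul, mul_comm]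
  rfl

set_option linter.unusedSectionVars false in
lemma sum_inter_le (E : Finset (L × R)) (hR : ∀ a : R, rdeg E a ≤ 2)
    (u : L) (vs : Finset L) (hu : u ∉ vs) :
    ∑ v ∈ vs, (nbrs E u ∩ nbrs E v).card ≤ ldeg E u := by
  rw [← Finset.card_biUnion]
  · exact Finset.card_le_card (Finset.biUnion_subset.mpr fun v _ => Finset.inter_subset_left)
  · intro v1 h1 v2 h2 hne
    rw [Function.onFun, Finset.disjoint_left]
    intro a ha1 ha2
    simp only [Finset.mem_inter, mem_nbrs] at ha1 ha2
    have hsub : ({u, v1, v2} : Finset L) ⊆ rnbrs E a := by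
      intro x hx
      simp only [Finset.mem_insert, Finset.mem_singleton] at hx
      rcases hx with rfl | rfl | rfl
      · exact mem_rnbrs.mpr ha1.1
      · exact mem_rnbrs.mpr ha1.2
      · exact mem_rnbrs.mpr ha2.2
    have hu1 : u ≠ v1 := fun h => hu (h ▸ h1)
    have hu2 : u ≠ v2 := fun h => hu (h ▸ h2)
    have h3 : ({u, v1, v2} : Finset L).card = 3 := by
      rw [Finset.card_insert_of_notMem, Finset.card_insert_of_notMem] <;>
        simp [hne, hu1, hu2]
    have := Finset.card_le_card hsub
    rw [h3] at this
    exact absurd (this.trans (hR a)) (by norm_num)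

lemma bfcnn_zero_of_ldeg_le {E : Finset (L × R)} {u v : L} (huv : u ≠ v)
    (h : ldeg E u ≤ 1 ∨ ldeg E v ≤ 1) : bfcnn E u v = 0 := by
  rw [bfcnn_eq huv]
  apply Nat.choose_eq_zero_of_lt
  rcases h with h | h
  · exact lt_of_le_of_lt (le_trans (Finset.card_le_card Finset.inter_subset_left) h) one_lt_two
  · exact lt_of_le_of_lt (le_trans (Finset.card_le_card Finset.inter_subset_right) h) one_lt_two

lemma sum6 {α M : Type*} [DecidableEq α] [AddCommMonoid M] {x1 x2 x3 x4 x5 x6 : α}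
    (h12 : x1 ≠ x2) (h13 : x1 ≠ x3) (h14 : x1 ≠ x4) (h15 : x1 ≠ x5) (h16 : x1 ≠ x6)
    (h23 : x2 ≠ x3) (h24 : x2 ≠ x4) (h25 : x2 ≠ x5) (h26 : x2 ≠ x6)
    (h34 : x3 ≠ x4) (h35 : x3 ≠ x5) (h36 : x3 ≠ x6)
    (h45 : x4 ≠ x5) (h46 : x4 ≠ x6) (h56 : x5 ≠ x6) (f : α → M) :
    ∑ v ∈ ({x1, x2, x3, x4, x5, x6} : Finset α), f v
      = f x1 + (f x2 + (f x3 + (f x4 + (f x5 + f x6)))) := by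
  rw [Finset.sum_insert (by simp [h12, h13, h14, h15, h16]),
    Finset.sum_insert (by simp [h23, h24, h25, h26]),
    Finset.sum_insert (by simp [h34, h35, h36]),
    Finset.sum_insert (by simp [h45, h46]),
    Finset.sum_insert (by simp [h56]), Finset.sum_singleton]

lemma choose_two_succ (m : ℕ) : (m + 1).choose 2 = m.choose 2 + m := by
  simp [Nat.choose_succ_succ, Nat.choose_one_right]; omega

lemma choose_two_add (x y : ℕ) : (x + y).choose 2 = x.choose 2 + y.choose 2 + x * y := by
  induction y with
  | zero => simp
  | succ y ih =>
    have h1 : (x + (y+1)) = (x + y) + 1 := by ring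
    rw [h1, choose_two_succ, choose_two_succ, ih, Nat.mul_add, Nat.mul_one]
    omega

lemma core (p q a b c d s t : ℕ) (ht : 2 ≤ t) (hts : t < s)
    (h1 : p + a + b ≤ s) (h2 : p + c + d ≤ s) (h3 : q + a + c ≤ t) (h4 : q + b + d ≤ t)
    (heq : p.choose 2 + q.choose 2 + a.choose 2 + b.choose 2 + c.choose 2 + d.choose 2
      = s.choose 2 + t.choose 2) :
    p = s ∧ q = t ∧ a = 0 ∧ b = 0 ∧ c = 0 ∧ d = 0 := by
  obtain ⟨e1, he1⟩ := Nat.le.dest h1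
  obtain ⟨e2, he2⟩ := Nat.le.dest h2
  obtain ⟨e3, he3⟩ := Nat.le.dest h3
  obtain ⟨e4, he4⟩ := Nat.le.dest h4
  have E1 : s.choose 2 = p.choose 2 + a.choose 2 + b.choose 2 + e1.choose 2
      + (p*a + p*b + p*e1 + a*b + a*e1 + b*e1) := by
    rw [← he1, choose_two_add (p+a+b) e1, choose_two_add (p+a) b, choose_two_add p a]; ring
  have E2 : s.choose 2 = p.choose 2 + c.choose 2 + d.choose 2 + e2.choose 2
      + (p*c + p*d + p*e2 + c*d + c*e2 + d*e2) := by
    rw [← he2, choose_two_add (p+c+d) e2, choose_two_add (p+c) d, choose_two_add p c]; ring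
  have E3 : t.choose 2 = q.choose 2 + a.choose 2 + c.choose 2 + e3.choose 2
      + (q*a + q*c + q*e3 + a*c + a*e3 + c*e3) := by
    rw [← he3, choose_two_add (q+a+c) e3, choose_two_add (q+a) c, choose_two_add q a]; ring
  have E4 : t.choose 2 = q.choose 2 + b.choose 2 + d.choose 2 + e4.choose 2
      + (q*b + q*d + q*e4 + b*d + b*e4 + d*e4) := by
    rw [← he4, choose_two_add (q+b+d) e4, choose_two_add (q+b) d, choose_two_add q b]; ring
  have hz : p*a = 0 ∧ p*b = 0 ∧ p*c = 0 ∧ p*d = 0 ∧ p*e1 = 0 ∧ q*e3 = 0 ∧ a*b = 0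
      ∧ a*e1 = 0 ∧ b*e1 = 0 ∧ e1.choose 2 = 0 ∧ e3.choose 2 = 0 := by omega
  obtain ⟨z1, z2, z3, z4, z5, z6, z7, z8, z9, z10, z11⟩ := hz
  have he1' : e1 ≤ 1 := by
    by_contra h; exact absurd z10 (Nat.choose_pos (by omega)).ne'
  have he3' : e3 ≤ 1 := by
    by_contra h; exact absurd z11 (Nat.choose_pos (by omega)).ne'
  have d1 := Nat.mul_eq_zero.mp z1
  have d2 := Nat.mul_eq_zero.mp z2
  have d3 := Nat.mul_eq_zero.mp z3
  have d4 := Nat.mul_eq_zero.mp z4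
  have d5 := Nat.mul_eq_zero.mp z5
  have d6 := Nat.mul_eq_zero.mp z6
  have d7 := Nat.mul_eq_zero.mp z7
  have d8 := Nat.mul_eq_zero.mp z8
  have d9 := Nat.mul_eq_zero.mp z9
  omega

/-- Under the hypotheses of the previous statement, if moreover `x5` and `x6` share exactly
`n` neighbors, then `x1` and `x2` share all their `s` neighbors, `x3` and `x4` share all
their `t` neighbors, and no butterfly contains any other pair among `x1, …, x6`. -/
theorem stmt_11 {L R : Type*} [Fintype L] [DecidableEq L] [Fintype R] [DecidableEq R]
    (s t n : ℕ) (hts : t < s) (ht : 2 ≤ t) (hn : n = s.choose 2 + t.choose 2)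
    (E : Finset (L × R)) (hR : ∀ a : R, rdeg E a ≤ 2)
    (x1 x2 x3 x4 x5 x6 : L)
    (hdist : List.Pairwise (· ≠ ·) [x1, x2, x3, x4, x5, x6])
    (h1 : ldeg E x1 = s) (h2 : ldeg E x2 = s) (h3 : ldeg E x3 = t) (h4 : ldeg E x4 = t)
    (h5 : ldeg E x5 = n + 1) (h6 : ldeg E x6 = n + 1)
    (hrest : ∀ u : L, u ∉ ({x1, x2, x3, x4, x5, x6} : Finset L) → ldeg E u ≤ 1)
    (hbfc : bfc E = n + n.choose 2)
    (h56 : (nbrs E x5 ∩ nbrs E x6).card = n) :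
    (nbrs E x1 ∩ nbrs E x2).card = s ∧
    (nbrs E x3 ∩ nbrs E x4).card = t ∧
    bfcnn E x1 x3 = 0 ∧ bfcnn E x1 x4 = 0 ∧ bfcnn E x1 x5 = 0 ∧ bfcnn E x1 x6 = 0 ∧
    bfcnn E x2 x3 = 0 ∧ bfcnn E x2 x4 = 0 ∧ bfcnn E x2 x5 = 0 ∧ bfcnn E x2 x6 = 0 ∧
    bfcnn E x3 x5 = 0 ∧ bfcnn E x3 x6 = 0 ∧ bfcnn E x4 x5 = 0 ∧ bfcnn E x4 x6 = 0 := by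
  simp only [List.pairwise_cons, List.mem_cons, List.not_mem_nil, List.mem_singleton,
    forall_eq_or_imp, forall_eq, List.Pairwise.nil] at hdist
  obtain ⟨⟨h12, h13, h14, h15, h16, -⟩, ⟨h23, h24, h25, h26, -⟩, ⟨h34, h35, h36, -⟩,
    ⟨h45, h46, -⟩, ⟨h56', -⟩, -⟩ := hdist
  have h21 : x2 ≠ x1 := h12.symm
  have h31 : x3 ≠ x1 := h13.symm
  have h41 : x4 ≠ x1 := h14.symm
  have h51 : x5 ≠ x1 := h15.symm
  have h61 : x6 ≠ x1 := h16.symm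
  have h32 : x3 ≠ x2 := h23.symm
  have h42 : x4 ≠ x2 := h24.symm
  have h52 : x5 ≠ x2 := h25.symm
  have h62 : x6 ≠ x2 := h26.symm
  have h43 : x4 ≠ x3 := h34.symm
  have h53 : x5 ≠ x3 := h35.symm
  have h63 : x6 ≠ x3 := h36.symm
  have h54 : x5 ≠ x4 := h45.symm
  have h64 : x6 ≠ x4 := h46.symm
  have h65 : x6 ≠ x5 := h56'.symm
  have e21 : nbrs E x2 ∩ nbrs E x1 = nbrs E x1 ∩ nbrs E x2 := Finset.inter_comm _ _
  have e31 : nbrs E x3 ∩ nbrs E x1 = nbrs E x1 ∩ nbrs E x3 := Finset.inter_comm _ _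
  have e41 : nbrs E x4 ∩ nbrs E x1 = nbrs E x1 ∩ nbrs E x4 := Finset.inter_comm _ _
  have e51 : nbrs E x5 ∩ nbrs E x1 = nbrs E x1 ∩ nbrs E x5 := Finset.inter_comm _ _
  have e61 : nbrs E x6 ∩ nbrs E x1 = nbrs E x1 ∩ nbrs E x6 := Finset.inter_comm _ _
  have e32 : nbrs E x3 ∩ nbrs E x2 = nbrs E x2 ∩ nbrs E x3 := Finset.inter_comm _ _
  have e42 : nbrs E x4 ∩ nbrs E x2 = nbrs E x2 ∩ nbrs E x4 := Finset.inter_comm _ _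
  have e52 : nbrs E x5 ∩ nbrs E x2 = nbrs E x2 ∩ nbrs E x5 := Finset.inter_comm _ _
  have e62 : nbrs E x6 ∩ nbrs E x2 = nbrs E x2 ∩ nbrs E x6 := Finset.inter_comm _ _
  have e43 : nbrs E x4 ∩ nbrs E x3 = nbrs E x3 ∩ nbrs E x4 := Finset.inter_comm _ _
  have e53 : nbrs E x5 ∩ nbrs E x3 = nbrs E x3 ∩ nbrs E x5 := Finset.inter_comm _ _
  have e63 : nbrs E x6 ∩ nbrs E x3 = nbrs E x3 ∩ nbrs E x6 := Finset.inter_comm _ _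
  have e54 : nbrs E x5 ∩ nbrs E x4 = nbrs E x4 ∩ nbrs E x5 := Finset.inter_comm _ _
  have e64 : nbrs E x6 ∩ nbrs E x4 = nbrs E x4 ∩ nbrs E x6 := Finset.inter_comm _ _
  have e65 : nbrs E x6 ∩ nbrs E x5 = nbrs E x5 ∩ nbrs E x6 := Finset.inter_comm _ _
  -- the sum over all off-diagonal pairs reduces to the six distinguished nodes
  have key := double_count E
  have hsub : ∑ p ∈ ({x1, x2, x3, x4, x5, x6} : Finset L).offDiag, bfcnn E p.1 p.2
      = ∑ p ∈ (Finset.univ : Finset L).offDiag, bfcnn E p.1 p.2 := by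
    apply Finset.sum_subset
    · intro p _; exact Finset.mem_offDiag.mpr ⟨Finset.mem_univ _, Finset.mem_univ _,
        (Finset.mem_offDiag.mp ‹_›).2.2⟩
    · intro p hp hnp
      have hpp : p.1 ≠ p.2 := (Finset.mem_offDiag.mp hp).2.2
      have hor : p.1 ∉ ({x1, x2, x3, x4, x5, x6} : Finset L)
          ∨ p.2 ∉ ({x1, x2, x3, x4, x5, x6} : Finset L) := by
        by_contra hcon
        push_neg at hcon
        exact hnp (Finset.mem_offDiag.mpr ⟨hcon.1, hcon.2, hpp⟩)
      exact bfcnn_zero_of_ldeg_le hpp (hor.imp (hrest p.1) (hrest p.2))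
  have hbig : 2 * bfc E = ∑ u ∈ ({x1, x2, x3, x4, x5, x6} : Finset L),
      ∑ v ∈ ({x1, x2, x3, x4, x5, x6} : Finset L), (if u ≠ v then bfcnn E u v else 0) := by
    rw [← key, ← hsub]
    have hod : ({x1, x2, x3, x4, x5, x6} : Finset L).offDiag
        = (({x1, x2, x3, x4, x5, x6} : Finset L) ×ˢ ({x1, x2, x3, x4, x5, x6} : Finset L)).filter
          (fun p => p.1 ≠ p.2) := by
      ext p
      simp [Finset.mem_offDiag, Finset.mem_product, and_assoc]
    rw [hod, Finset.sum_filter, Finset.sum_product]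
  simp only [sum6 h12 h13 h14 h15 h16 h23 h24 h25 h26 h34 h35 h36 h45 h46 h56'] at hbig
  simp only [ne_eq, h12, h13, h14, h15, h16, h23, h24, h25, h26, h34, h35, h36, h45, h46, h56', h21, h31, h41, h51, h61, h32, h42, h52, h62, h43, h53, h63, h54, h64, h65, not_false_eq_true, not_true_eq_false, if_true, if_false,
    ite_true, ite_false, add_zero, zero_add] at hbig
  simp only [bfcnn_eq h12, bfcnn_eq h13, bfcnn_eq h14, bfcnn_eq h15, bfcnn_eq h16, bfcnn_eq h23, bfcnn_eq h24, bfcnn_eq h25, bfcnn_eq h26, bfcnn_eq h34, bfcnn_eq h35, bfcnn_eq h36, bfcnn_eq h45, bfcnn_eq h46, bfcnn_eq h56', bfcnn_eq h21, bfcnn_eq h31, bfcnn_eq h41, bfcnn_eq h51, bfcnn_eq h61, bfcnn_eq h32, bfcnn_eq h42, bfcnn_eq h52, bfcnn_eq h62, bfcnn_eq h43, bfcnn_eq h53, bfcnn_eq h63, bfcnn_eq h54, bfcnn_eq h64, bfcnn_eq h65, e21, e31, e41, e51, e61, e32, e42, e52, e62, e43, e53, e63, e54, e64, e65, h56] at 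hbig
  -- degree constraints
  have hc1 := sum_inter_le E hR x1 {x2, x3, x4} (by simp [h12, h13, h14])
  rw [Finset.sum_insert (by simp [h23, h24]), Finset.sum_insert (by simp [h34]),
    Finset.sum_singleton, h1] at hc1
  have hc2 := sum_inter_le E hR x2 {x1, x3, x4} (by simp [h21, h23, h24])
  rw [Finset.sum_insert (by simp [h13, h14]), Finset.sum_insert (by simp [h34]),
    Finset.sum_singleton, h2] at hc2
  have hc3 := sum_inter_le E hR x3 {x1, x2, x4} (by simp [h31, h32, h34])
  rw [Finset.sum_insert (by simp [h12, h14]), Finset.sum_insert (by simp [h24]),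
    Finset.sum_singleton, h3] at hc3
  have hc4 := sum_inter_le E hR x4 {x1, x2, x3} (by simp [h41, h42, h43])
  rw [Finset.sum_insert (by simp [h12, h13]), Finset.sum_insert (by simp [h23]),
    Finset.sum_singleton, h4] at hc4
  have hc5 := sum_inter_le E hR x5 {x1, x2, x3, x4, x6} (by simp [h51, h52, h53, h54, h56'])
  rw [Finset.sum_insert (by simp [h12, h13, h14, h16]), Finset.sum_insert (by simp [h23, h24, h26]),
    Finset.sum_insert (by simp [h34, h36]), Finset.sum_insert (by simp [h46]),
    Finset.sum_singleton, h5] at hc5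
  have hc6 := sum_inter_le E hR x6 {x1, x2, x3, x4, x5} (by simp [h61, h62, h63, h64, h65])
  rw [Finset.sum_insert (by simp [h12, h13, h14, h15]), Finset.sum_insert (by simp [h23, h24, h25]),
    Finset.sum_insert (by simp [h34, h35]), Finset.sum_insert (by simp [h45]),
    Finset.sum_singleton, h6] at hc6
  simp only [e21, e31, e41, e51, e61, e32, e42, e52, e62, e43, e53, e63, e54, e64, e65, h56] at hc2 hc3 hc4 hc5 hc6
  -- the pairs involving x5 or x6 have at most one common neighbor
  have hb15 : ((nbrs E x1 ∩ nbrs E x5).card).choose 2 = 0 := Nat.choose_eq_zero_of_lt (by omega)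
  have hb25 : ((nbrs E x2 ∩ nbrs E x5).card).choose 2 = 0 := Nat.choose_eq_zero_of_lt (by omega)
  have hb35 : ((nbrs E x3 ∩ nbrs E x5).card).choose 2 = 0 := Nat.choose_eq_zero_of_lt (by omega)
  have hb45 : ((nbrs E x4 ∩ nbrs E x5).card).choose 2 = 0 := Nat.choose_eq_zero_of_lt (by omega)
  have hb16 : ((nbrs E x1 ∩ nbrs E x6).card).choose 2 = 0 := Nat.choose_eq_zero_of_lt (by omega)
  have hb26 : ((nbrs E x2 ∩ nbrs E x6).card).choose 2 = 0 := Nat.choose_eq_zero_of_lt (by omega)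
  have hb36 : ((nbrs E x3 ∩ nbrs E x6).card).choose 2 = 0 := Nat.choose_eq_zero_of_lt (by omega)
  have hb46 : ((nbrs E x4 ∩ nbrs E x6).card).choose 2 = 0 := Nat.choose_eq_zero_of_lt (by omega)
  -- apply the arithmetic core lemma
  obtain ⟨hc12, hc34, hz13, hz14, hz23, hz24⟩ :=
    core ((nbrs E x1 ∩ nbrs E x2).card) ((nbrs E x3 ∩ nbrs E x4).card)
      ((nbrs E x1 ∩ nbrs E x3).card) ((nbrs E x1 ∩ nbrs E x4).card)
      ((nbrs E x2 ∩ nbrs E x3).card) ((nbrs E x2 ∩ nbrs E x4).card) s t ht hts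
      (by omega) (by omega) (by omega) (by omega) (by omega)
  refine ⟨hc12, hc34, ?_, ?_, ?_, ?_, ?_, ?_, ?_, ?_, ?_, ?_, ?_, ?_⟩
  · rw [bfcnn_eq h13, hz13]; rfl
  · rw [bfcnn_eq h14, hz14]; rfl
  · rw [bfcnn_eq h15]; exact hb15
  · rw [bfcnn_eq h16]; exact hb16
  · rw [bfcnn_eq h23, hz23]; rfl
  · rw [bfcnn_eq h24, hz24]; rfl
  · rw [bfcnn_eq h25]; exact hb25
  · rw [bfcnn_eq h26]; exact hb26
  · rw [bfcnn_eq h35]; exact hb35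
  · rw [bfcnn_eq h36]; exact hb36
  · rw [bfcnn_eq h45]; exact hb45
  · rw [bfcnn_eq h46]; exact hb46
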